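/- Fix N ≥ 2 and d ≥ 2. The nonnegative matrix M_F^d(N) is irreducible: for every pair of partitions μ, ν of N with at most d parts, there exists a positive integer q such that the (μ, ν) entry of the q-th matrix power (M_F^d(N))^q is strictly positive. -/

import Mathlib

/-- `AddBox α μ` means that the Young diagram `μ` is obtained from the Young diagram `α`
by adding a single box; equivalently, `α` is obtained from `μ` by removing a box:
the diagram of `α` is contained in the diagram of `μ` and `μ` has exactly one more cell. -/
def AddBox (α μ : YoungDiagram) : Prop :=
  α ≤ μ ∧ μ.card = α.card + 1

/-- `MoveBox μ ν` (written `μ/ν = □` in the paper): `μ ≠ ν` and some Young diagram can be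
obtained from both `μ` and `ν` by removing a single box, i.e. `μ` is obtained from `ν`
by moving a single box. -/
def MoveBox (μ ν : YoungDiagram) : Prop :=
  μ ≠ ν ∧ ∃ α : YoungDiagram, AddBox α μ ∧ AddBox α ν

/-- `nBox μ` is the number `n_μ` of Young diagrams obtained from `μ` by removing a box. -/
noncomputable def nBox (μ : YoungDiagram) : ℕ :=
  Nat.card {α : YoungDiagram // AddBox α μ}

/-- Partitions of `N` with at most `d` parts, identified with Young diagrams with `N` boxes
whose first column has height at most `d`. -/
abbrev PartLE (N d : ℕ) : Type :=
  {μ : YoungDiagram // μ.card = N ∧ μ.colLen 0 ≤ d}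

instance : DecidableEq YoungDiagram := fun μ ν =>
  decidable_of_iff (μ.cells = ν.cells) (YoungDiagram.ext_iff).symm

theorem cell_lt_card {μ : YoungDiagram} {i j : ℕ} (h : (i, j) ∈ μ.cells) :
    i < μ.card ∧ j < μ.card := by
  rw [YoungDiagram.mem_cells] at h
  constructor
  · have hsub : Finset.range (i + 1) ×ˢ ({j} : Finset ℕ) ⊆ μ.cells := by
      rintro ⟨a, b⟩ hab
      rw [Finset.mem_product, Finset.mem_range, Finset.mem_singleton] at hab
      rw [YoungDiagram.mem_cells]
      obtain ⟨h1, h2⟩ := hab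
      subst h2
      exact μ.up_left_mem (Nat.lt_succ_iff.mp h1) le_rfl h
    have := Finset.card_le_card hsub
    simpa [YoungDiagram.card] using this
  · have hsub : ({i} : Finset ℕ) ×ˢ Finset.range (j + 1) ⊆ μ.cells := by
      rintro ⟨a, b⟩ hab
      rw [Finset.mem_product, Finset.mem_range, Finset.mem_singleton] at hab
      rw [YoungDiagram.mem_cells]
      obtain ⟨h1, h2⟩ := hab
      subst h1
      exact μ.up_left_mem le_rfl (Nat.lt_succ_iff.mp h2) h
    have := Finset.card_le_card hsub
    simpa [YoungDiagram.card] using this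

noncomputable instance (N d : ℕ) : Fintype (PartLE N d) := by
  apply Fintype.ofInjective
    (β := {s : Finset (ℕ × ℕ) // s ∈ (Finset.range N ×ˢ Finset.range N).powerset})
    (f := fun μ => ⟨μ.1.cells, by
      rw [Finset.mem_powerset]
      rintro ⟨i, j⟩ hc
      have h := cell_lt_card hc
      rw [μ.2.1] at h
      simp only [Finset.mem_product, Finset.mem_range]
      exact h⟩)
  rintro ⟨μ, hμ⟩ ⟨ν, hν⟩ h
  simp only [Subtype.mk.injEq] at h ⊢
  exact YoungDiagram.ext h

open scoped Classical in
/-- The Teleportation Matrix `M_F^d(N)`, indexed by the partitions of `N` with at most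
`d` parts: the diagonal entry at `μ` is `n_μ`, the off-diagonal entry at `(μ, ν)` is `1`
if `μ/ν = □` and `0` otherwise.  For `d ≥ N` this is the full matrix `M_F(N)`. -/
noncomputable def MF (N d : ℕ) : Matrix (PartLE N d) (PartLE N d) ℝ :=
  fun μ ν => if μ = ν then (nBox μ.1 : ℝ) else if MoveBox μ.1 ν.1 then 1 else 0


-- ### Auxiliary lemmas

open YoungDiagram

lemma zero_mem_of_card_pos {μ : YoungDiagram} (h : 0 < μ.card) : (0, 0) ∈ μ := by
  obtain ⟨⟨i, j⟩, hij⟩ := Finset.card_pos.mp h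
  exact μ.up_left_mem (Nat.zero_le _) (Nat.zero_le _) ((mem_cells _).mp hij)

lemma colLen0_pos {μ : YoungDiagram} (h : 0 < μ.card) : 0 < μ.colLen 0 :=
  mem_iff_lt_colLen.mp (zero_mem_of_card_pos h)

/-- remove corner at end of last row -/
lemma exists_corner {μ : YoungDiagram} (h : 0 < μ.card) :
    ∃ α : YoungDiagram, AddBox α μ ∧
      α.cells = μ.cells.erase (μ.colLen 0 - 1, μ.rowLen (μ.colLen 0 - 1) - 1) := by
  set r := μ.colLen 0 - 1 with hr
  set c := μ.rowLen r - 1 with hc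
  have hcol : 0 < μ.colLen 0 := colLen0_pos h
  have hrlt : r < μ.colLen 0 := Nat.sub_lt hcol one_pos
  have hrow : 0 < μ.rowLen r := mem_iff_lt_rowLen.mp (mem_iff_lt_colLen.mpr hrlt : (r, 0) ∈ μ)
  have hclt : c < μ.rowLen r := Nat.sub_lt hrow one_pos
  have hmem : (r, c) ∈ μ := mem_iff_lt_rowLen.mpr hclt
  have hnr : (r + 1, c) ∉ μ := by
    rw [mem_iff_lt_colLen]
    have := μ.colLen_anti 0 c (Nat.zero_le _)
    omega
  have hnc : (r, c + 1) ∉ μ := by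
    rw [mem_iff_lt_rowLen]; omega
  refine ⟨⟨μ.cells.erase (r, c), ?_⟩, ⟨?_, ?_⟩, rfl⟩
  · rintro ⟨i2, j2⟩ ⟨i1, j1⟩ hle h2
    simp only [Finset.coe_erase, Set.mem_diff, Finset.mem_coe, Set.mem_singleton_iff] at h2 ⊢
    obtain ⟨h2m, h2ne⟩ := h2
    obtain ⟨hi, hj⟩ := hle
    have h1m : (i1, j1) ∈ μ.cells := μ.isLowerSet (Prod.mk_le_mk.mpr ⟨hi, hj⟩) h2m
    refine ⟨h1m, ?_⟩
    rintro heq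
    obtain ⟨rfl, rfl⟩ := Prod.mk.injEq .. ▸ heq
    simp only at hi hj
    rcases Nat.lt_or_ge r i2 with hlt | hge
    · exact hnr (μ.isLowerSet (Prod.mk_le_mk.mpr ⟨hlt, hj⟩) h2m)
    · have : i2 = r := le_antisymm hge hi
      subst this
      have : c < j2 := lt_of_le_of_ne hj (fun he => h2ne (by simp [Prod.ext_iff, he]))
      exact hnc (μ.isLowerSet (Prod.mk_le_mk.mpr ⟨le_rfl, this⟩) h2m)
  · exact cells_subset_iff.mp (Finset.erase_subset _ _)
  · show μ.card = (μ.cells.erase (r, c)).card + 1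
    rw [Finset.card_erase_of_mem hmem]
    have hc' : μ.cells.card = μ.card := rfl
    omega


/-- Move the corner of the last row to the end of the first row. -/
lemma exists_move {μ : YoungDiagram} (h2 : 2 ≤ μ.colLen 0) :
    ∃ ν : YoungDiagram, MoveBox μ ν ∧ ν.card = μ.card ∧ ν.colLen 0 ≤ μ.colLen 0 ∧
      ν.rowLen 0 = μ.rowLen 0 + 1 := by
  have hcard : 0 < μ.card := by
    rcases Nat.eq_zero_or_pos μ.card with h0 | h; swap
    · exact h
    · exfalso
      have hempty : μ.cells = ∅ := Finset.card_eq_zero.mp h0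
      have : ((0:ℕ), 0) ∈ μ.cells := (mem_cells _).mpr (mem_iff_lt_colLen.mpr (by omega))
      rw [hempty] at this
      simp at this
  obtain ⟨α, ⟨hle, hcardα⟩, hα⟩ := exists_corner hcard
  set r := μ.colLen 0 - 1 with hr
  set c := μ.rowLen r - 1 with hc
  set c0 := μ.rowLen 0 with hc0
  have hrpos : 1 ≤ r := by omega
  have hc0pos : 0 < c0 := mem_iff_lt_rowLen.mp (zero_mem_of_card_pos hcard)
  have hnotin : ((0 : ℕ), c0) ∉ μ := by rw [mem_iff_lt_rowLen]; omega
  have hnotin' : ((0 : ℕ), c0 + 1) ∉ μ := by rw [mem_iff_lt_rowLen]; omega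
  have hsub : α.cells ⊆ μ.cells := cells_subset_iff.mpr hle
  have hnotinα : ((0 : ℕ), c0) ∉ α.cells := fun hm => hnotin (hsub hm)
  have hlow : IsLowerSet (↑(insert ((0:ℕ), c0) α.cells) : Set (ℕ × ℕ)) := by
    rintro ⟨i2, j2⟩ ⟨i1, j1⟩ hle12 hmem2
    obtain ⟨hi, hj⟩ := hle12
    simp only [Finset.coe_insert, Set.mem_insert_iff, Finset.mem_coe] at hmem2 ⊢
    rcases hmem2 with heq | hmem2
    · obtain ⟨h1, h2'⟩ : i2 = 0 ∧ j2 = c0 := by simpa [Prod.ext_iff] using heq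
      subst h1; subst h2'
      simp only at hi hj
      have hi0 : i1 = 0 := Nat.le_zero.mp hi
      subst hi0
      rcases eq_or_lt_of_le hj with heq' | hlt
      · left; simp [heq']
      · right
        rw [hα, Finset.mem_erase]
        refine ⟨?_, (mem_cells _).mpr (mem_iff_lt_rowLen.mpr hlt)⟩
        intro h0
        have : (0:ℕ) = r ∧ j1 = c := by simpa [Prod.ext_iff] using h0
        omega
    · exact Or.inr (α.isLowerSet (Prod.mk_le_mk.mpr ⟨hi, hj⟩) hmem2)
  set ν : YoungDiagram := ⟨insert (0, c0) α.cells, hlow⟩ with hν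
  have hνcells : ν.cells = insert (0, c0) α.cells := rfl
  have hmemν : ((0:ℕ), c0) ∈ ν := (mem_cells _).mp (by rw [hνcells]; exact Finset.mem_insert_self _ _)
  refine ⟨ν, ⟨?_, α, ⟨hle, hcardα⟩, ?_, ?_⟩, ?_, ?_, ?_⟩
  · intro heq
    rw [heq] at hnotin
    exact hnotin hmemν
  · rw [← cells_subset_iff, hνcells]
    exact Finset.subset_insert _ _
  · show ν.cells.card = α.cells.card + 1
    rw [hνcells, Finset.card_insert_of_notMem hnotinα]
  · show ν.cells.card = μ.cells.card
    rw [hνcells, Finset.card_insert_of_notMem hnotinα]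
    have : μ.cells.card = α.cells.card + 1 := hcardα
    omega
  · by_contra hlt
    push_neg at hlt
    have hmem : (μ.colLen 0, 0) ∈ ν.cells := (mem_cells _).mpr (mem_iff_lt_colLen.mpr hlt)
    rw [hνcells] at hmem
    rcases Finset.mem_insert.mp hmem with heq | hmem'
    · have : μ.colLen 0 = 0 ∧ (0:ℕ) = c0 := by simpa [Prod.ext_iff] using heq
      omega
    · have : (μ.colLen 0, 0) ∈ μ := hsub hmem'
      rw [mem_iff_lt_colLen] at this
      omega
  · have h1 : c0 < ν.rowLen 0 := mem_iff_lt_rowLen.mp hmemν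
    have h2' : ¬ ((0:ℕ), c0 + 1) ∈ ν := by
      intro hm
      have := (mem_cells _).mpr hm
      rw [hνcells] at this
      rcases Finset.mem_insert.mp this with heq | hm'
      · have : (0:ℕ) = 0 ∧ c0 + 1 = c0 := by simpa [Prod.ext_iff] using heq
        omega
      · exact hnotin' ((mem_cells _).mp (hsub hm'))
    rw [mem_iff_lt_rowLen] at h2'
    omega


instance instFiniteAddBox (μ : YoungDiagram) : Finite {α : YoungDiagram // AddBox α μ} := by
  apply Finite.of_injective (β := {s : Finset (ℕ × ℕ) // s ∈ μ.cells.powerset})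
    (f := fun a => ⟨a.1.cells, Finset.mem_powerset.mpr (YoungDiagram.cells_subset_iff.mpr a.2.1)⟩)
  rintro ⟨a, ha⟩ ⟨b, hb⟩ h
  simp only [Subtype.mk.injEq] at h ⊢
  exact YoungDiagram.ext h

lemma nBox_pos {μ : YoungDiagram} (h : 0 < μ.card) : 0 < nBox μ := by
  obtain ⟨α, hα, _⟩ := exists_corner h
  have : Nonempty {α : YoungDiagram // AddBox α μ} := ⟨⟨α, hα⟩⟩
  exact Nat.card_pos

/-- The single-row Young diagram with `N` boxes. -/
def topRow (N : ℕ) : YoungDiagram :=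
  ⟨({0} : Finset ℕ) ×ˢ Finset.range N, by
    rintro ⟨i2, j2⟩ ⟨i1, j1⟩ ⟨hi, hj⟩ hm
    simp only [Finset.coe_product, Set.mem_prod, Finset.coe_singleton,
      Set.mem_singleton_iff, Finset.coe_range, Set.mem_Iio] at hm ⊢
    exact ⟨Nat.le_zero.mp (hm.1 ▸ hi), lt_of_le_of_lt hj hm.2⟩⟩

lemma topRow_card (N : ℕ) : (topRow N).card = N := by
  show (({0} : Finset ℕ) ×ˢ Finset.range N).card = N
  simp [Finset.card_product]

lemma topRow_colLen (N d : ℕ) (hd : 1 ≤ d) : (topRow N).colLen 0 ≤ d := by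
  have : ¬ ((1 : ℕ), 0) ∈ topRow N := by
    intro hm
    have : (1, (0:ℕ)) ∈ ({0} : Finset ℕ) ×ˢ Finset.range N := hm
    simp at this
  rw [YoungDiagram.mem_iff_lt_colLen] at this
  omega

/-- `μ` is in the top-row partition of `PartLE N d`. -/
noncomputable def topP (N d : ℕ) (hN : 1 ≤ N) (hd : 1 ≤ d) : PartLE N d :=
  ⟨topRow N, topRow_card N, topRow_colLen N d hd⟩

/-- One move step inside `PartLE N d`. -/
def RStep (N d : ℕ) (μ ν : PartLE N d) : Prop := MoveBox μ.1 ν.1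

lemma RStep_symm (N d : ℕ) : Symmetric (RStep N d) := by
  rintro μ ν ⟨hne, α, h1, h2⟩
  exact ⟨hne.symm, α, h2, h1⟩

lemma rowLen0_le {μ : YoungDiagram} {N : ℕ} (hc : μ.card = N) : μ.rowLen 0 ≤ N := by
  have hsub : ({0} : Finset ℕ) ×ˢ Finset.range (μ.rowLen 0) ⊆ μ.cells := by
    rintro ⟨i, j⟩ hm
    simp only [Finset.mem_product, Finset.mem_singleton, Finset.mem_range] at hm
    obtain ⟨rfl, hj⟩ := hm
    exact (mem_cells _).mpr (mem_iff_lt_rowLen.mpr hj)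
  have := Finset.card_le_card hsub
  simp only [Finset.card_product, Finset.card_singleton, Finset.card_range, one_mul] at this
  have : μ.cells.card = N := hc
  omega

lemma eq_topRow {μ : YoungDiagram} {N : ℕ} (hc : μ.card = N) (hr : μ.rowLen 0 = N) :
    μ = topRow N := by
  apply YoungDiagram.ext
  apply (Finset.eq_of_subset_of_card_le ?_ ?_).symm
  · rintro ⟨i, j⟩ hm
    have hm' : (i, j) ∈ ({0} : Finset ℕ) ×ˢ Finset.range N := hm
    simp only [Finset.mem_product, Finset.mem_singleton, Finset.mem_range] at hm'
    obtain ⟨rfl, hj⟩ := hm'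
    exact (mem_cells _).mpr (mem_iff_lt_rowLen.mpr (hr ▸ hj))
  · have h1 : μ.cells.card = N := hc
    have h2 : (topRow N).cells.card = N := topRow_card N
    omega

lemma colLen0_ge_two {μ : YoungDiagram} {N : ℕ} (hc : μ.card = N) (hr : μ.rowLen 0 < N) :
    2 ≤ μ.colLen 0 := by
  have hNpos : 0 < N := by omega
  have hcard : 0 < μ.card := by omega
  have h1 : 0 < μ.colLen 0 := colLen0_pos hcard
  by_contra hcol
  push_neg at hcol
  have hsub : μ.cells ⊆ ({0} : Finset ℕ) ×ˢ Finset.range (μ.rowLen 0) := by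
    rintro ⟨i, j⟩ hm
    have hm' : (i, j) ∈ μ := (mem_cells _).mp hm
    have hi : i < μ.colLen j := mem_iff_lt_colLen.mp hm'
    have hij : μ.colLen j ≤ μ.colLen 0 := μ.colLen_anti 0 j (Nat.zero_le _)
    have hi0 : i = 0 := by omega
    subst hi0
    have hj : j < μ.rowLen 0 := mem_iff_lt_rowLen.mp hm'
    simp [hj]
  have := Finset.card_le_card hsub
  simp only [Finset.card_product, Finset.card_singleton, Finset.card_range, one_mul] at this
  have : μ.cells.card = N := hc
  omega

lemma reach_top (N d : ℕ) (hN : 1 ≤ N) (hd : 2 ≤ d) :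
    ∀ k : ℕ, ∀ μ : PartLE N d, N - μ.1.rowLen 0 ≤ k →
      Relation.ReflTransGen (RStep N d) μ (topP N d hN (by omega)) := by
  intro k
  induction k with
  | zero =>
    intro μ hk
    have hle : μ.1.rowLen 0 ≤ N := rowLen0_le μ.2.1
    have : μ.1.rowLen 0 = N := by omega
    have : μ = topP N d hN (by omega) := Subtype.ext (eq_topRow μ.2.1 this)
    rw [this]
  | succ k ih =>
    intro μ hk
    have hle : μ.1.rowLen 0 ≤ N := rowLen0_le μ.2.1
    rcases eq_or_lt_of_le hle with heq | hlt
    · have : μ = topP N d hN (by omega) := Subtype.ext (eq_topRow μ.2.1 heq)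
      rw [this]
    · have h2 : 2 ≤ μ.1.colLen 0 := colLen0_ge_two μ.2.1 hlt
      obtain ⟨ν, hmv, hcard, hcol, hrow⟩ := exists_move h2
      have hν : ν.card = N ∧ ν.colLen 0 ≤ d := ⟨by rw [hcard, μ.2.1], le_trans hcol μ.2.2⟩
      refine Relation.ReflTransGen.head (b := ⟨ν, hν⟩) (show RStep N d μ ⟨ν, hν⟩ from hmv) (ih ⟨ν, hν⟩ ?_)
      simp only
      omega

lemma MF_apply_nonneg (N d : ℕ) (μ ν : PartLE N d) : 0 ≤ MF N d μ ν := by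
  unfold MF
  split_ifs <;> first | exact Nat.cast_nonneg _ | norm_num

lemma MF_pow_nonneg (N d : ℕ) (q : ℕ) (μ ν : PartLE N d) : 0 ≤ ((MF N d) ^ q) μ ν := by
  induction q generalizing μ ν with
  | zero =>
    simp only [pow_zero, Matrix.one_apply]
    split_ifs <;> norm_num
  | succ q ih =>
    rw [pow_succ, Matrix.mul_apply]
    exact Finset.sum_nonneg fun x _ => mul_nonneg (ih μ x) (MF_apply_nonneg N d x ν)

lemma MF_diag_pos (N d : ℕ) (hN : 1 ≤ N) (μ : PartLE N d) : 0 < MF N d μ μ := by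
  unfold MF
  rw [if_pos rfl]
  have : 0 < nBox μ.1 := nBox_pos (by rw [μ.2.1]; omega)
  exact_mod_cast this

lemma MF_step_pos (N d : ℕ) {μ ν : PartLE N d} (h : RStep N d μ ν) : 0 < MF N d μ ν := by
  unfold MF
  have hne : μ ≠ ν := fun he => h.1 (congrArg Subtype.val he)
  rw [if_neg hne, if_pos (show MoveBox μ.1 ν.1 from h)]
  norm_num

lemma exists_pow_pos (N d : ℕ) (hN : 1 ≤ N) {μ ν : PartLE N d}
    (h : Relation.ReflTransGen (RStep N d) μ ν) :
    ∃ q : ℕ, 0 < q ∧ 0 < ((MF N d) ^ q) μ ν := by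
  induction h with
  | refl =>
    exact ⟨1, one_pos, by simpa [pow_one] using MF_diag_pos N d hN μ⟩
  | @tail b c hab hbc ih =>
    obtain ⟨q, hq, hpos⟩ := ih
    refine ⟨q + 1, by omega, ?_⟩
    rw [pow_succ, Matrix.mul_apply]
    apply Finset.sum_pos' (fun x _ => mul_nonneg (MF_pow_nonneg N d q μ x) (MF_apply_nonneg N d x c))
    exact ⟨b, Finset.mem_univ b, mul_pos hpos (MF_step_pos N d hbc)⟩

/-- Fix `N ≥ 2` and `d ≥ 2`.  The nonnegative matrix `M_F^d(N)` is irreducible: for every pair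
of partitions `μ`, `ν` of `N` with at most `d` parts there is a positive integer `q` such that
the `(μ, ν)` entry of `(M_F^d(N))^q` is strictly positive. -/
theorem MF_irreducible (N d : ℕ) (hN : 2 ≤ N) (hd : 2 ≤ d) (μ ν : PartLE N d) :
    ∃ q : ℕ, 0 < q ∧ 0 < ((MF N d) ^ q) μ ν := by
  have hN1 : 1 ≤ N := by omega
  have h1 : Relation.ReflTransGen (RStep N d) μ (topP N d hN1 (by omega)) :=
    reach_top N d hN1 hd (N - μ.1.rowLen 0) μ le_rfl
  have h2 : Relation.ReflTransGen (RStep N d) (topP N d hN1 (by omega)) ν :=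
    (haveI : Std.Symm (RStep N d) := { symm := fun _ _ h => RStep_symm N d h }; Std.Symm.symm _ _ (reach_top N d hN1 hd (N - ν.1.rowLen 0) ν le_rfl))
  exact exists_pow_pos N d hN1 (h1.trans h2)
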